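/- Let V be a positive random variable and θ > 0. Then log E[e^{−λV}] ≍ −λ·(log log λ)^{−θ} as λ → ∞ holds if and only if log log|log P(V ≤ ε)| ≍ ε^{−1/θ} as ε → 0⁺. -/

import Mathlib

open MeasureTheory Filter
open scoped ENNReal

private lemma hexp_div_rpow (p : ℝ) :
    Tendsto (fun x : ℝ => Real.exp x / x ^ p) atTop atTop := by
  obtain ⟨n, hn⟩ := exists_nat_ge p
  apply tendsto_atTop_mono' atTop
    (f₁ := fun x : ℝ => Real.exp x / x ^ (n : ℕ))
  · filter_upwards [eventually_ge_atTop (1 : ℝ)] with x hx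
    have hx0 : (0:ℝ) < x := lt_of_lt_of_le one_pos hx
    have h1 : x ^ p ≤ x ^ (n:ℕ) := by
      rw [← Real.rpow_natCast x n]
      exact Real.rpow_le_rpow_of_exponent_le hx hn
    have h2 : (0:ℝ) < x ^ p := Real.rpow_pos_of_pos hx0 p
    gcongr
  · exact Real.tendsto_exp_div_pow_atTop n

private lemma ev_rpow_le_exp (p K : ℝ) : ∀ᶠ x : ℝ in atTop, K * x ^ p ≤ Real.exp x := by
  filter_upwards [(hexp_div_rpow p).eventually_ge_atTop K, eventually_ge_atTop (1:ℝ)]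
    with x hx hx1
  have hx0 : (0:ℝ) < x ^ p := Real.rpow_pos_of_pos (lt_of_lt_of_le one_pos hx1) p
  calc K * x ^ p ≤ (Real.exp x / x ^ p) * x ^ p :=
        mul_le_mul_of_nonneg_right hx hx0.le
    _ = Real.exp x := by field_simp

private lemma tendsto_loglog : Tendsto (fun x : ℝ => Real.log (Real.log x)) atTop atTop :=
  Real.tendsto_log_atTop.comp Real.tendsto_log_atTop

private lemma ev_x_le_expexp (K : ℝ) (p : ℝ) :
    ∀ᶠ x : ℝ in atTop, K * x ^ p ≤ Real.exp (Real.exp x) := by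
  filter_upwards [ev_rpow_le_exp p K] with x hx
  refine hx.trans (Real.exp_le_exp.2 ?_)
  linarith [Real.add_one_le_exp x]

private lemma tendsto_A (θ : ℝ) (hθ : 0 < θ) :
    Tendsto (fun l : ℝ => l * Real.log (Real.log l) ^ (-θ)) atTop atTop := by
  apply tendsto_atTop_mono' atTop (f₁ := fun l : ℝ => l ^ (1/2 : ℝ) / 2)
  · filter_upwards [tendsto_loglog.eventually (ev_rpow_le_exp θ 1),
      tendsto_loglog.eventually_gt_atTop 0,
      Real.tendsto_log_atTop.eventually_gt_atTop 0,
      eventually_ge_atTop (1:ℝ)] with l h1 h2 h3 h4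
    have hl0 : (0:ℝ) < l := lt_of_lt_of_le one_pos h4
    have e1 : Real.log (Real.log l) ^ θ ≤ Real.log l := by
      rwa [one_mul, Real.exp_log h3] at h1
    set y := l ^ (1/2:ℝ) with hy
    have hy0 : (0:ℝ) < y := Real.rpow_pos_of_pos hl0 _
    have e2 : Real.log l ≤ 2 * y := by
      have h5 : Real.log y ≤ y - 1 := Real.log_le_sub_one_of_pos hy0
      have h6 : Real.log y = (1/2) * Real.log l := by
        rw [hy, Real.log_rpow hl0]
      nlinarith
    have e3 : Real.log (Real.log l) ^ θ ≤ 2 * y := e1.trans e2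
    have hpow : (0:ℝ) < Real.log (Real.log l) ^ θ := Real.rpow_pos_of_pos h2 θ
    have hll : y * y = l := by
      rw [hy, ← Real.rpow_add hl0]; norm_num
    rw [Real.rpow_neg h2.le]
    have hinv : (2 * y)⁻¹ ≤ (Real.log (Real.log l) ^ θ)⁻¹ :=
      inv_anti₀ hpow e3
    calc y / 2 = l * (2*y)⁻¹ := by field_simp; linear_combination hll
      _ ≤ l * (Real.log (Real.log l) ^ θ)⁻¹ :=
          mul_le_mul_of_nonneg_left hinv hl0.le
  · exact (tendsto_rpow_atTop (by norm_num : (0:ℝ) < 1/2)).atTop_div_const two_pos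


private lemma loglemA {L F le : ℝ} (hF : 0 < F) (hF1 : F ≤ 1)
    (hL : Real.exp (-le) * F ≤ L) : -Real.log L ≤ le + |Real.log F| := by
  have hL0 : 0 < L := lt_of_lt_of_le (by positivity) hL
  have h1 : Real.log (Real.exp (-le) * F) ≤ Real.log L := Real.log_le_log (by positivity) hL
  rw [Real.log_mul (Real.exp_ne_zero _) hF.ne', Real.log_exp] at h1
  rw [abs_of_nonpos (Real.log_nonpos hF.le hF1)]
  linarith

private lemma loglemB {L F le : ℝ} (hF : 0 < F) (hF1 : F ≤ 1)
    (hGl : le ≤ |Real.log F|) (hL0 : 0 < L) (hup : L ≤ F + Real.exp (-le)) :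
    le - Real.log 2 ≤ -Real.log L := by
  have habs : |Real.log F| = -Real.log F := abs_of_nonpos (Real.log_nonpos hF.le hF1)
  rw [habs] at hGl
  have hF' : F ≤ Real.exp (-le) := by
    calc F = Real.exp (Real.log F) := (Real.exp_log hF).symm
      _ ≤ _ := Real.exp_le_exp.2 (by linarith)
  have h2 : L ≤ 2 * Real.exp (-le) := by linarith
  have h3 : Real.log L ≤ Real.log (2 * Real.exp (-le)) := Real.log_le_log hL0 h2
  rw [Real.log_mul two_ne_zero (Real.exp_ne_zero _), Real.log_exp] at h3
  linarith

private lemma loglemC {L F le : ℝ} (hψ : -Real.log L ≤ le / 2) (hle : 2 * Real.log 2 ≤ le)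
    (hL0 : 0 < L) (hF1 : F ≤ 1) (hup : L ≤ F + Real.exp (-le)) :
    0 < F ∧ |Real.log F| ≤ le := by
  have hLlow : Real.exp (-(le / 2)) ≤ L := by
    calc Real.exp (-(le / 2)) ≤ Real.exp (Real.log L) := Real.exp_le_exp.2 (by linarith)
      _ = L := Real.exp_log hL0
  have e1 : Real.exp (-(le / 2)) ≤ 2⁻¹ := by
    have h5 : Real.exp (-(le / 2)) ≤ Real.exp (-Real.log 2) :=
      Real.exp_le_exp.2 (by linarith)
    have h6 : Real.exp (-Real.log 2) = 2⁻¹ := by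
      rw [Real.exp_neg, Real.exp_log two_pos]
    rwa [h6] at h5
  have hsplit : Real.exp (-le) = Real.exp (-(le / 2)) * Real.exp (-(le / 2)) := by
    rw [← Real.exp_add]; ring_nf
  have hFlow : Real.exp (-(le / 2)) / 2 ≤ F := by nlinarith [Real.exp_pos (-(le / 2))]
  have hF0 : 0 < F := lt_of_lt_of_le (by positivity) hFlow
  refine ⟨hF0, ?_⟩
  rw [abs_of_nonpos (Real.log_nonpos hF0.le hF1)]
  have h4 : Real.log (Real.exp (-(le / 2)) / 2) ≤ Real.log F :=
    Real.log_le_log (by positivity) hFlow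
  rw [Real.log_div (Real.exp_ne_zero _) two_ne_zero, Real.log_exp] at h4
  have hlog2 : (0:ℝ) < Real.log 2 := Real.log_pos one_lt_two
  linarith

private lemma ev_low (θ d κ : ℝ) (hθ : 0 ≤ θ) (hκ : κ < 1) :
    ∀ᶠ x : ℝ in atTop, Real.exp (κ * x) ≤ Real.exp x + d - θ * Real.log x := by
  have h4 : (0:ℝ) < 4 := by norm_num
  filter_upwards [ev_rpow_le_exp 1 (4 * (θ + 1)),
      eventually_ge_atTop (Real.log 4 / (1 - κ)),
      eventually_ge_atTop (1 : ℝ), eventually_ge_atTop (-2 * d)] with x h1 h2 h3 hd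
  rw [Real.rpow_one] at h1
  have hx0 : (0:ℝ) < x := lt_of_lt_of_le one_pos h3
  have hlx : Real.log x ≤ x := (Real.log_le_sub_one_of_pos hx0).trans (by linarith)
  have hθl : θ * Real.log x ≤ Real.exp x / 4 := by
    have hlog0 : 0 ≤ Real.log x := Real.log_nonneg h3
    have : θ * Real.log x ≤ (θ + 1) * x := by nlinarith
    nlinarith
  have hexpk : Real.exp (κ * x) ≤ Real.exp x / 4 := by
    have hk : κ * x ≤ x - Real.log 4 := by
      have h1κ : 0 < 1 - κ := by linarith
      rw [div_le_iff₀ h1κ] at h2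
      nlinarith
    calc Real.exp (κ * x) ≤ Real.exp (x - Real.log 4) := Real.exp_le_exp.2 hk
      _ = Real.exp x / 4 := by rw [Real.exp_sub, Real.exp_log h4]
  have hdx : -d ≤ Real.exp x / 2 := by
    have := Real.add_one_le_exp x
    linarith
  linarith

private lemma ev_mid (θ : ℝ) :
    ∀ᶠ x : ℝ in atTop, Real.exp (Real.exp (x / 2)) * x ^ θ ≤ Real.exp (Real.exp x) := by
  filter_upwards [ev_rpow_le_exp θ 1, eventually_ge_atTop (2 : ℝ)] with x h1 h2
  rw [one_mul] at h1
  have e1 : Real.exp (x / 2) * Real.exp (x / 2) = Real.exp x := by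
    rw [← Real.exp_add]; ring_nf
  have e2 : x / 2 + 1 ≤ Real.exp (x / 2) := Real.add_one_le_exp _
  calc Real.exp (Real.exp (x / 2)) * x ^ θ
      ≤ Real.exp (Real.exp (x / 2)) * Real.exp x :=
        mul_le_mul_of_nonneg_left h1 (Real.exp_nonneg _)
    _ = Real.exp (Real.exp (x / 2) + x) := (Real.exp_add _ _).symm
    _ ≤ Real.exp (Real.exp x) := Real.exp_le_exp.2 (by nlinarith)



private lemma meas_S {Ω : Type} [MeasurableSpace Ω] {V : Ω → ℝ} (hV : Measurable V)
    (ε : ℝ) : MeasurableSet {ω | V ω ≤ ε} := hV measurableSet_Iic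

private lemma F_le_one' {Ω : Type} [MeasurableSpace Ω] (P : Measure Ω)
    [IsProbabilityMeasure P] {V : Ω → ℝ} (ε : ℝ) : (P {ω | V ω ≤ ε}).toReal ≤ 1 := by
  have h : P {ω | V ω ≤ ε} ≤ P Set.univ := measure_mono (Set.subset_univ _)
  rw [measure_univ] at h
  simpa using ENNReal.toReal_mono (by simp) h

section Meas
variable {Ω : Type} [MeasurableSpace Ω] (P : Measure Ω) [IsProbabilityMeasure P]
  {V : Ω → ℝ} (hV : Measurable V) (hVpos : ∀ ω, 0 < V ω)
include hV hVpos

private lemma intg {l : ℝ} (hl : 0 ≤ l) :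
    Integrable (fun ω => Real.exp (-(l * V ω))) P := by
  refine (integrable_const (1:ℝ)).mono' ((hV.const_mul l).neg.exp).aestronglyMeasurable
    (Filter.Eventually.of_forall fun ω => ?_)
  rw [Real.norm_eq_abs, abs_of_pos (Real.exp_pos _)]
  exact Real.exp_le_one_iff.2 (neg_nonpos.2 (mul_nonneg hl (hVpos ω).le))

private lemma Lpos {l : ℝ} (hl : 0 ≤ l) :
    0 < ∫ ω, Real.exp (-(l * V ω)) ∂P := by
  rw [integral_pos_iff_support_of_nonneg_ae
    (Filter.Eventually.of_forall fun ω => (Real.exp_pos _).le) (intg P hV hVpos hl)]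
  have : Function.support (fun ω => Real.exp (-(l * V ω))) = Set.univ :=
    Set.eq_univ_of_forall fun ω => Function.mem_support.2 (Real.exp_pos _).ne'
  simp [this]

private lemma L_le_one {l : ℝ} (hl : 0 ≤ l) :
    ∫ ω, Real.exp (-(l * V ω)) ∂P ≤ 1 := by
  calc ∫ ω, Real.exp (-(l * V ω)) ∂P ≤ ∫ _ω, (1:ℝ) ∂P :=
        integral_mono (intg P hV hVpos hl) (integrable_const 1)
          (fun ω => Real.exp_le_one_iff.2 (neg_nonpos.2 (mul_nonneg hl (hVpos ω).le)))
    _ = 1 := by simp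

private lemma L_lower {l : ℝ} (hl : 0 ≤ l) (ε : ℝ) :
    Real.exp (-(l * ε)) * (P {ω | V ω ≤ ε}).toReal ≤ ∫ ω, Real.exp (-(l * V ω)) ∂P := by
  have key := integral_mono (μ := P)
    ((integrable_const (Real.exp (-(l * ε)))).indicator (meas_S hV ε))
    (intg P hV hVpos hl) (fun ω => ?_)
  · rwa [integral_indicator_const _ (meas_S hV ε), smul_eq_mul, mul_comm] at key
  · by_cases hω : ω ∈ {ω | V ω ≤ ε}
    · rw [Set.indicator_of_mem hω]
      exact Real.exp_le_exp.2 (neg_le_neg (mul_le_mul_of_nonneg_left hω hl))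
    · rw [Set.indicator_of_notMem hω]
      exact (Real.exp_pos _).le

private lemma L_upper {l : ℝ} (hl : 0 ≤ l) (ε : ℝ) :
    ∫ ω, Real.exp (-(l * V ω)) ∂P ≤ (P {ω | V ω ≤ ε}).toReal + Real.exp (-(l * ε)) := by
  set ind : Ω → ℝ := {ω | V ω ≤ ε}.indicator fun _ => (1:ℝ) with hind
  have hint1 : Integrable ind P := (integrable_const (1:ℝ)).indicator (meas_S hV ε)
  have hint2 : Integrable (fun _ : Ω => Real.exp (-(l * ε))) P := integrable_const _
  have key : ∫ ω, Real.exp (-(l * V ω)) ∂P ≤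
      ∫ ω, (ind ω + Real.exp (-(l * ε))) ∂P := by
    refine integral_mono (intg P hV hVpos hl) (hint1.add hint2) (fun ω => ?_)
    by_cases hω : ω ∈ {ω | V ω ≤ ε}
    · have hi : ind ω = 1 := by rw [hind]; exact Set.indicator_of_mem hω _
      have h1 : Real.exp (-(l * V ω)) ≤ 1 :=
        Real.exp_le_one_iff.2 (neg_nonpos.2 (mul_nonneg hl (hVpos ω).le))
      rw [hi]
      linarith [Real.exp_pos (-(l * ε))]
    · have hi : ind ω = 0 := by rw [hind]; exact Set.indicator_of_notMem hω _
      have h2 : ε ≤ V ω := le_of_lt (not_le.mp hω)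
      have h3 := Real.exp_le_exp.2 (neg_le_neg (mul_le_mul_of_nonneg_left h2 hl))
      rw [hi]
      linarith
  refine key.trans (le_of_eq ?_)
  rw [integral_add hint1 hint2, integral_const]
  rw [hind, integral_indicator_const _ (meas_S hV ε), smul_eq_mul, mul_one]
  simp
  rfl

private lemma L_of_Fzero {l ε : ℝ} (hl : 0 ≤ l) (h0 : P {ω | V ω ≤ ε} = 0) :
    ∫ ω, Real.exp (-(l * V ω)) ∂P ≤ Real.exp (-(l * ε)) := by
  have hae : ∀ᵐ ω ∂P, ε < V ω := by
    rw [ae_iff]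
    convert h0 using 2
    ext ω; simp [not_lt]
  calc ∫ ω, Real.exp (-(l * V ω)) ∂P ≤ ∫ _ω, Real.exp (-(l * ε)) ∂P :=
        integral_mono_ae (intg P hV hVpos hl) (integrable_const _)
          (hae.mono fun ω hω =>
            Real.exp_le_exp.2 (neg_le_neg (mul_le_mul_of_nonneg_left hω.le hl)))
    _ = Real.exp (-(l * ε)) := by simp

private lemma F_tendsto_zero :
    ∀ᶠ ε in nhdsWithin (0:ℝ) (Set.Ioi 0),
      (P {ω | V ω ≤ ε}).toReal ≤ Real.exp (-Real.exp 1) := by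
  have hiInter : (⋂ n : ℕ, {ω | V ω ≤ 1 / (n + 1)}) = ∅ := by
    ext ω
    simp only [Set.mem_iInter, Set.mem_setOf_eq, Set.mem_empty_iff_false, iff_false, not_forall]
    obtain ⟨n, hn⟩ := exists_nat_gt (1 / V ω)
    refine ⟨n, not_le.2 ?_⟩
    have h1 : 1 / V ω < (n:ℝ) + 1 := hn.trans (lt_add_one _)
    rw [div_lt_iff₀ (hVpos ω)] at h1
    rw [div_lt_iff₀ (by positivity : (0:ℝ) < (n:ℝ) + 1)]
    nlinarith [hVpos ω]
  have ht := MeasureTheory.tendsto_measure_iInter_atTop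
    (μ := P) (s := fun n : ℕ => {ω | V ω ≤ 1 / (n + 1)})
    (fun n => (meas_S hV _).nullMeasurableSet)
    (fun m n hmn ω hω => by
      simp only [Set.mem_setOf_eq] at hω ⊢
      refine hω.trans ?_
      have hc : (m:ℝ) ≤ n := by exact_mod_cast hmn
      gcongr)
    ⟨0, by simp [measure_ne_top]⟩
  rw [hiInter] at ht
  simp only [measure_empty] at ht
  have hpos : (0:ℝ≥0∞) < ENNReal.ofReal (Real.exp (-Real.exp 1)) := by
    simp [Real.exp_pos]
  obtain ⟨n₀, hn₀⟩ := (ht.eventually_lt_const hpos).exists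
  have hδ : (0:ℝ) < 1 / (n₀ + 1) := by positivity
  filter_upwards [Ioc_mem_nhdsGT_of_mem (Set.mem_Ico.2 ⟨le_refl 0, hδ⟩)] with ε hε
  have hsub : P {ω | V ω ≤ ε} ≤ P {ω | V ω ≤ 1 / (n₀ + 1)} :=
    measure_mono fun ω hω => le_trans hω hε.2
  have := hsub.trans hn₀.le
  calc (P {ω | V ω ≤ ε}).toReal ≤ (ENNReal.ofReal (Real.exp (-Real.exp 1))).toReal :=
        ENNReal.toReal_mono (by simp) this
    _ = Real.exp (-Real.exp 1) := ENNReal.toReal_ofReal (Real.exp_pos _).le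

end Meas

private lemma dirA {Ω : Type} [MeasurableSpace Ω] (P : Measure Ω) [IsProbabilityMeasure P]
    {V : Ω → ℝ} (hV : Measurable V) (hVpos : ∀ ω, 0 < V ω) {θ : ℝ} (hθ : 0 < θ)
    {c C : ℝ} (hc : 0 < c) (hcC : c ≤ C)
    (h : ∀ᶠ l in atTop,
        c * (l * Real.log (Real.log l) ^ (-θ)) ≤
          -Real.log (∫ ω, Real.exp (-(l * V ω)) ∂P) ∧
        -Real.log (∫ ω, Real.exp (-(l * V ω)) ∂P) ≤
          C * (l * Real.log (Real.log l) ^ (-θ))) :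
    ∃ c' C' : ℝ, 0 < c' ∧ c' ≤ C' ∧
      ∀ᶠ ε in nhdsWithin (0 : ℝ) (Set.Ioi 0),
        c' * ε ^ (-1 / θ) ≤
          Real.log (Real.log |Real.log ((P {ω | V ω ≤ ε}).toReal)|) ∧
        Real.log (Real.log |Real.log ((P {ω | V ω ≤ ε}).toReal)|) ≤
          C' * ε ^ (-1 / θ) := by
  have hC : 0 < C := hc.trans_le hcC
  set κ : ℝ := (1/2 : ℝ) ^ (1/θ : ℝ) with hκdef
  have hκ0 : 0 < κ := Real.rpow_pos_of_pos (by norm_num) _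
  have hκ1 : κ < 1 := Real.rpow_lt_one (by norm_num) (by norm_num) (by positivity)
  refine ⟨(c/4) ^ (1/θ : ℝ), (2*C) ^ (1/θ : ℝ),
    Real.rpow_pos_of_pos (by positivity) _,
    Real.rpow_le_rpow (by positivity) (by linarith) (by positivity), ?_⟩
  -- the parametrizations
  have hta : Tendsto (fun ε : ℝ => ((2*C) * ε⁻¹) ^ (1/θ : ℝ))
      (nhdsWithin 0 (Set.Ioi 0)) atTop :=
    (tendsto_rpow_atTop (by positivity)).comp
      (tendsto_inv_nhdsGT_zero.const_mul_atTop (by positivity))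
  have htb : Tendsto (fun ε : ℝ => ((c/2) * ε⁻¹) ^ (1/θ : ℝ))
      (nhdsWithin 0 (Set.Ioi 0)) atTop :=
    (tendsto_rpow_atTop (by positivity)).comp
      (tendsto_inv_nhdsGT_zero.const_mul_atTop (by positivity))
  have htla : Tendsto (fun ε : ℝ => Real.exp (Real.exp (((2*C) * ε⁻¹) ^ (1/θ : ℝ))))
      (nhdsWithin 0 (Set.Ioi 0)) atTop :=
    Real.tendsto_exp_atTop.comp (Real.tendsto_exp_atTop.comp hta)
  have htlb : Tendsto (fun ε : ℝ => Real.exp (Real.exp (((c/2) * ε⁻¹) ^ (1/θ : ℝ))))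
      (nhdsWithin 0 (Set.Ioi 0)) atTop :=
    Real.tendsto_exp_atTop.comp (Real.tendsto_exp_atTop.comp htb)
  filter_upwards [self_mem_nhdsWithin,
      Ioo_mem_nhdsGT_of_mem (Set.mem_Ico.2 ⟨le_refl (0:ℝ), one_pos⟩),
      htla.eventually h, htlb.eventually h,
      hta.eventually (ev_x_le_expexp (2 * Real.log 2 / (2*C)) θ),
      hta.eventually_gt_atTop 0, htb.eventually_gt_atTop 0,
      htb.eventually (ev_low θ (Real.log (c/2)) κ hθ.le hκ1)]
    with ε hε hε1 hha hhb ha2 ha0 hb0 hbl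
  have hε0 : (0:ℝ) < ε := hε
  have hε1' : ε < 1 := hε1.2
  set F : ℝ := (P {ω | V ω ≤ ε}).toReal with hF
  have hF1 : F ≤ 1 := F_le_one' P ε
  set a : ℝ := ((2*C) * ε⁻¹) ^ (1/θ : ℝ) with hadef
  set b : ℝ := ((c/2) * ε⁻¹) ^ (1/θ : ℝ) with hbdef
  set la : ℝ := Real.exp (Real.exp a) with hladef
  set lb : ℝ := Real.exp (Real.exp b) with hlbdef
  have hla0 : (0:ℝ) < la := Real.exp_pos _
  have hlb0 : (0:ℝ) < lb := Real.exp_pos _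
  have hxa0 : (0:ℝ) < (2*C) * ε⁻¹ := by positivity
  have hxb0 : (0:ℝ) < (c/2) * ε⁻¹ := by positivity
  -- a^θ = 2C/ε, a^{-θ} = ε/(2C)
  have haθ : a ^ θ = (2*C) * ε⁻¹ := by
    rw [hadef, ← Real.rpow_mul hxa0.le, one_div, inv_mul_cancel₀ hθ.ne', Real.rpow_one]
  have haθ' : a ^ (-θ) = ((2*C) * ε⁻¹)⁻¹ := by
    rw [Real.rpow_neg ha0.le, haθ]
  have hbθ : b ^ θ = (c/2) * ε⁻¹ := by
    rw [hbdef, ← Real.rpow_mul hxb0.le, one_div, inv_mul_cancel₀ hθ.ne', Real.rpow_one]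
  have hbθ' : b ^ (-θ) = ((c/2) * ε⁻¹)⁻¹ := by
    rw [Real.rpow_neg hb0.le, hbθ]
  -- loglog la = a, loglog lb = b
  have hlla : Real.log (Real.log la) = a := by rw [hladef, Real.log_exp, Real.log_exp]
  have hllb : Real.log (Real.log lb) = b := by rw [hlbdef, Real.log_exp, Real.log_exp]
  -- upper raw step: ψ(la) ≤ la*ε/2 and la*ε ≥ 2 log 2
  have hψa : -Real.log (∫ ω, Real.exp (-(la * V ω)) ∂P) ≤ la * ε / 2 := by
    refine (hha.2).trans (le_of_eq ?_)
    rw [hlla, haθ']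
    field_simp
  have hla2 : 2 * Real.log 2 ≤ la * ε := by
    have := ha2
    rw [haθ] at this
    calc 2 * Real.log 2 = (2 * Real.log 2 / (2*C)) * ((2*C) * ε⁻¹) * ε := by
          field_simp
      _ ≤ la * ε := by
          refine mul_le_mul_of_nonneg_right ?_ hε0.le
          rw [hladef]
          exact this
  obtain ⟨hF0, hGla⟩ := loglemC hψa hla2 (Lpos P hV hVpos hla0.le) hF1
    (by simpa [neg_mul] using L_upper P hV hVpos hla0.le ε)
  -- lower step
  set G : ℝ := |Real.log F| with hG
  have hψb : -Real.log (∫ ω, Real.exp (-(lb * V ω)) ∂P) ≤ lb * ε + G :=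
    loglemA hF0 hF1 (by simpa [neg_mul] using L_lower P hV hVpos hlb0.le ε)
  have hψb2 : 2 * (lb * ε) ≤ -Real.log (∫ ω, Real.exp (-(lb * V ω)) ∂P) := by
    refine le_trans (le_of_eq ?_) hhb.1
    rw [hllb, hbθ']
    field_simp
  have hGlow : lb * ε ≤ G := by linarith
  -- lb * ε = (c/2) * exp(exp b) * (b^θ)⁻¹
  have hεval : ε = (c/2) * (b ^ θ)⁻¹ := by
    rw [hbθ]
    field_simp
  have hQ : lb * ε = (c/2) * (Real.exp (Real.exp b) * (b ^ θ)⁻¹) := by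
    rw [hlbdef] at *
    rw [hεval]; ring
  have hbθpos : (0:ℝ) < b ^ θ := Real.rpow_pos_of_pos hb0 _
  have hQ0 : (0:ℝ) < lb * ε := by positivity
  have hG0 : (0:ℝ) < G := lt_of_lt_of_le hQ0 hGlow
  have hlogQ : Real.log (lb * ε) = Real.log (c/2) + Real.exp b - θ * Real.log b := by
    rw [hQ, Real.log_mul (by positivity) (by positivity),
      Real.log_mul (by positivity) (by positivity), Real.log_exp, Real.log_inv,
      Real.log_rpow hb0]
    ring
  have hlogG : Real.exp (κ * b) ≤ Real.log G := by
    have h1 : Real.log (lb * ε) ≤ Real.log G := Real.log_le_log hQ0 hGlow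
    rw [hlogQ] at h1
    linarith [hbl]
  have hlogG1 : (1:ℝ) < Real.log G :=
    lt_of_lt_of_le (by simpa using Real.exp_lt_exp.2 (by positivity : (0:ℝ) < κ * b)) hlogG
  -- conclusion lower:
  have e0 : ε ^ (-1/θ : ℝ) = (ε⁻¹) ^ (1/θ : ℝ) := by
    rw [show (-1/θ : ℝ) = -(1/θ) by ring, Real.rpow_neg hε0.le, ← Real.inv_rpow hε0.le]
  constructor
  · have h2 : κ * b ≤ Real.log (Real.log G) := by
      have := Real.log_le_log (Real.exp_pos _) hlogG
      rwa [Real.log_exp] at this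
    refine le_trans (le_of_eq ?_) h2
    have e1 : κ * b = ((1/2 : ℝ) * ((c/2) * ε⁻¹)) ^ (1/θ : ℝ) := by
      rw [hκdef, hbdef, ← Real.mul_rpow (by norm_num) hxb0.le]
    have e2 : ((1/2 : ℝ) * ((c/2) * ε⁻¹)) = (c/4) * ε⁻¹ := by ring
    have e3 : ((c/4) * ε⁻¹ : ℝ) ^ (1/θ : ℝ) = (c/4) ^ (1/θ : ℝ) * (ε⁻¹) ^ (1/θ : ℝ) :=
      Real.mul_rpow (by positivity) (by positivity)
    rw [e0, e1, e2, e3]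
  · -- upper
    have hGa : G ≤ Real.exp (Real.exp a) := by
      refine hGla.trans ?_
      calc la * ε ≤ la * 1 := by
            exact mul_le_mul_of_nonneg_left hε1'.le hla0.le
        _ = Real.exp (Real.exp a) := by rw [mul_one, hladef]
    have h3 : Real.log G ≤ Real.exp a := by
      have := Real.log_le_log hG0 hGa
      rwa [Real.log_exp] at this
    have h4 : Real.log (Real.log G) ≤ a :=
      (Real.log_le_iff_le_exp (by linarith)).2 h3
    refine h4.trans (le_of_eq ?_)
    have e4 : a = (2*C) ^ (1/θ : ℝ) * (ε⁻¹) ^ (1/θ : ℝ) := by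
      rw [hadef, Real.mul_rpow (by positivity) (by positivity)]
    rw [e4, e0]

set_option maxHeartbeats 1600000 in
private lemma dirB {Ω : Type} [MeasurableSpace Ω] (P : Measure Ω) [IsProbabilityMeasure P]
    {V : Ω → ℝ} (hV : Measurable V) (hVpos : ∀ ω, 0 < V ω) {θ : ℝ} (hθ : 0 < θ)
    {c C : ℝ} (hc : 0 < c) (hcC : c ≤ C)
    (h : ∀ᶠ ε in nhdsWithin (0 : ℝ) (Set.Ioi 0),
        c * ε ^ (-1 / θ) ≤
          Real.log (Real.log |Real.log ((P {ω | V ω ≤ ε}).toReal)|) ∧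
        Real.log (Real.log |Real.log ((P {ω | V ω ≤ ε}).toReal)|) ≤
          C * ε ^ (-1 / θ)) :
    ∃ c' C' : ℝ, 0 < c' ∧ c' ≤ C' ∧
      ∀ᶠ l in atTop,
        c' * (l * Real.log (Real.log l) ^ (-θ)) ≤
          -Real.log (∫ ω, Real.exp (-(l * V ω)) ∂P) ∧
        -Real.log (∫ ω, Real.exp (-(l * V ω)) ∂P) ≤
          C' * (l * Real.log (Real.log l) ^ (-θ)) := by
  have hC : 0 < C := hc.trans_le hcC
  refine ⟨(c/2) ^ θ / 2, (2*C) ^ θ + 1, by positivity, ?_, ?_⟩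
  · have h1 : (c/2 : ℝ) ^ θ ≤ (2*C) ^ θ :=
      Real.rpow_le_rpow (by positivity) (by linarith) hθ.le
    have h2 : (0:ℝ) < (c/2 : ℝ) ^ θ := Real.rpow_pos_of_pos (by positivity) _
    linarith
  -- extract δ from the hypothesis
  obtain ⟨s, hs, hsub⟩ := eventually_iff_exists_mem.mp (h.and (F_tendsto_zero P hV hVpos))
  rw [mem_nhdsGT_iff_exists_Ioc_subset] at hs
  obtain ⟨δ, hδ0, hδsub⟩ := hs
  have hδ0' : (0:ℝ) < δ := hδ0
  have Hδ : ∀ ε : ℝ, 0 < ε → ε ≤ δ →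
      (c * ε ^ (-1 / θ) ≤
          Real.log (Real.log |Real.log ((P {ω | V ω ≤ ε}).toReal)|) ∧
        Real.log (Real.log |Real.log ((P {ω | V ω ≤ ε}).toReal)|) ≤
          C * ε ^ (-1 / θ)) ∧
      (P {ω | V ω ≤ ε}).toReal ≤ Real.exp (-Real.exp 1) :=
    fun ε h1 h2 => hsub ε (hδsub ⟨h1, h2⟩)
  -- threshold m
  set m : ℝ := min (δ ^ (1/θ : ℝ)) 1 with hmdef
  have hm0 : (0:ℝ) < m := lt_min (Real.rpow_pos_of_pos hδ0' _) one_pos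
  have htb : Tendsto (fun l : ℝ => c * (2 * Real.log (Real.log l))⁻¹) atTop (nhds 0) := by
    have := ((tendsto_loglog.const_mul_atTop two_pos).inv_tendsto_atTop).const_mul c
    simpa using this
  have hta : Tendsto (fun l : ℝ => 2 * C * (Real.log (Real.log l))⁻¹) atTop (nhds 0) := by
    have := (tendsto_loglog.inv_tendsto_atTop).const_mul (2*C)
    simpa using this
  filter_upwards [tendsto_loglog.eventually_gt_atTop 1,
      Real.tendsto_log_atTop.eventually_ge_atTop 1,
      eventually_gt_atTop (0:ℝ),
      htb.eventually_le_const hm0,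
      hta.eventually_le_const hm0,
      (tendsto_A θ hθ).eventually_ge_atTop (2 * Real.log 2 / ((c/2) ^ θ)),
      tendsto_loglog.eventually (ev_mid θ)] with l hL1 hlog1 hl0 hxb hxa hA hmid
  set L1 : ℝ := Real.log (Real.log l) with hL1def
  have hL10 : (0:ℝ) < L1 := lt_trans one_pos hL1
  have hlogl0 : (0:ℝ) < Real.log l := lt_of_lt_of_le one_pos hlog1
  have hexpL1 : Real.exp L1 = Real.log l := Real.exp_log hlogl0
  have hexpexpL1 : Real.exp (Real.exp L1) = l := by rw [hexpL1, Real.exp_log hl0]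
  set ψ : ℝ := -Real.log (∫ ω, Real.exp (-(l * V ω)) ∂P) with hψdef
  set A : ℝ := l * L1 ^ (-θ) with hAdef
  have hL1θpos : (0:ℝ) < L1 ^ θ := Real.rpow_pos_of_pos hL10 _
  have hAeq : A = l / L1 ^ θ := by
    rw [hAdef, Real.rpow_neg hL10.le, div_eq_mul_inv]
  have hA0 : (0:ℝ) < A := by rw [hAeq]; positivity
  constructor
  · -- LOWER BOUND
    set xb : ℝ := c * (2 * L1)⁻¹ with hxbdef
    have hxb0 : (0:ℝ) < xb := by positivity
    set εb : ℝ := xb ^ θ with hεbdef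
    have hεb0 : (0:ℝ) < εb := Real.rpow_pos_of_pos hxb0 _
    have hεbδ : εb ≤ δ := by
      have h1 : xb ≤ δ ^ (1/θ : ℝ) := le_trans hxb (min_le_left _ _)
      have h2 : xb ^ θ ≤ (δ ^ (1/θ : ℝ)) ^ θ := Real.rpow_le_rpow hxb0.le h1 hθ.le
      rwa [← Real.rpow_mul hδ0'.le, one_div, inv_mul_cancel₀ hθ.ne', Real.rpow_one] at h2
    obtain ⟨⟨Hb1, _⟩, HFb⟩ := Hδ εb hεb0 hεbδ
    -- c * εb ^ (-1/θ) = 2 * L1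
    have hθθ : θ * (-1/θ) = -1 := by field_simp
    have hεbinv : εb ^ (-1/θ : ℝ) = xb⁻¹ := by
      rw [hεbdef, ← Real.rpow_mul hxb0.le, hθθ, Real.rpow_neg_one]
    have hcεb : c * εb ^ (-1/θ : ℝ) = 2 * L1 := by
      rw [hεbinv, hxbdef]
      field_simp
    rw [hcεb] at Hb1
    -- F positivity and G ≥ e
    set F : ℝ := (P {ω | V ω ≤ εb}).toReal with hFdef
    set Gb : ℝ := |Real.log F| with hGbdef
    have hF1 : F ≤ 1 := F_le_one' P εb
    have hFnn : 0 ≤ F := ENNReal.toReal_nonneg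
    have hF0 : 0 < F := by
      rcases hFnn.eq_or_lt with h0 | h0
      · exfalso
        rw [hGbdef, ← h0] at Hb1
        simp only [Real.log_zero, abs_zero] at Hb1
        linarith
      · exact h0
    have hGe : Real.exp 1 ≤ Gb := by
      have h1 : Real.log F ≤ -Real.exp 1 := by
        have := Real.log_le_log hF0 HFb
        rwa [Real.log_exp] at this
      have habs : Gb = -Real.log F := by
        rw [hGbdef]
        exact abs_of_nonpos (by linarith [Real.exp_pos 1])
      rw [habs]
      linarith
    have hG0 : (0:ℝ) < Gb := lt_of_lt_of_le (Real.exp_pos 1) hGe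
    have hlogG1 : (1:ℝ) ≤ Real.log Gb := (Real.le_log_iff_exp_le hG0).2 hGe
    have hlogG : Real.exp (2 * L1) ≤ Real.log Gb :=
      (Real.le_log_iff_exp_le (by linarith)).1 Hb1
    have hGbig : Real.exp (Real.exp (2 * L1)) ≤ Gb :=
      (Real.le_log_iff_exp_le hG0).1 hlogG
    -- l * εb ≤ Gb
    have hεb1 : εb ≤ 1 := Real.rpow_le_one hxb0.le (le_trans hxb (min_le_right _ _)) hθ.le
    have hlεb : l * εb ≤ Gb := by
      have h1 : l * εb ≤ l := by
        calc l * εb ≤ l * 1 := mul_le_mul_of_nonneg_left hεb1 hl0.le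
          _ = l := mul_one l
      have h2 : l ≤ Real.exp (Real.exp (2 * L1)) := by
        have e1 : Real.exp (2 * L1) = Real.log l * Real.log l := by
          rw [two_mul, Real.exp_add, hexpL1]
        rw [← hexpexpL1, hexpL1, e1]
        exact Real.exp_le_exp.2 (by nlinarith)
      linarith
    -- apply loglemB
    have hψlow : l * εb - Real.log 2 ≤ ψ := by
      rw [hψdef]
      exact loglemB hF0 hF1 hlεb (Lpos P hV hVpos hl0.le)
        (by simpa [neg_mul] using L_upper P hV hVpos hl0.le εb)
    -- l * εb = (c/2)^θ * A
    have hlεbA : l * εb = (c/2) ^ θ * A := by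
      have e1 : xb = (c/2) * L1⁻¹ := by rw [hxbdef, mul_inv]; ring
      have e2 : εb = (c/2) ^ θ * L1 ^ (-θ) := by
        rw [hεbdef, e1, Real.mul_rpow (by positivity) (by positivity),
          Real.inv_rpow hL10.le, ← Real.rpow_neg hL10.le]
      rw [e2, hAdef]; ring
    have hAbig : 2 * Real.log 2 ≤ (c/2) ^ θ * A := by
      have hp : (0:ℝ) < (c/2) ^ θ := Real.rpow_pos_of_pos (by positivity) _
      have := mul_le_mul_of_nonneg_left hA (le_of_lt hp)
      calc 2 * Real.log 2 = (c/2) ^ θ * (2 * Real.log 2 / ((c/2) ^ θ)) := by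
            field_simp
        _ ≤ (c/2) ^ θ * A := this
    rw [hlεbA] at hψlow
    linarith
  · -- UPPER BOUND
    set xa : ℝ := 2 * C * L1⁻¹ with hxadef
    have hxa0 : (0:ℝ) < xa := by positivity
    set εa : ℝ := xa ^ θ with hεadef
    have hεa0 : (0:ℝ) < εa := Real.rpow_pos_of_pos hxa0 _
    have hεaδ : εa ≤ δ := by
      have h1 : xa ≤ δ ^ (1/θ : ℝ) := le_trans hxa (min_le_left _ _)
      have h2 : xa ^ θ ≤ (δ ^ (1/θ : ℝ)) ^ θ := Real.rpow_le_rpow hxa0.le h1 hθ.le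
      rwa [← Real.rpow_mul hδ0'.le, one_div, inv_mul_cancel₀ hθ.ne', Real.rpow_one] at h2
    obtain ⟨⟨Ha1, Ha2⟩, HFa⟩ := Hδ εa hεa0 hεaδ
    have hθθ : θ * (-1/θ) = -1 := by field_simp
    have hεainv : εa ^ (-1/θ : ℝ) = xa⁻¹ := by
      rw [hεadef, ← Real.rpow_mul hxa0.le, hθθ, Real.rpow_neg_one]
    have hCεa : C * εa ^ (-1/θ : ℝ) = L1 / 2 := by
      rw [hεainv, hxadef]
      field_simp
    have hcεa : c * εa ^ (-1/θ : ℝ) = c / (2*C) * L1 := by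
      rw [hεainv, hxadef]
      field_simp
    rw [hCεa] at Ha2
    rw [hcεa] at Ha1
    set F : ℝ := (P {ω | V ω ≤ εa}).toReal with hFdef
    set Ga : ℝ := |Real.log F| with hGadef
    have hF1 : F ≤ 1 := F_le_one' P εa
    have hFnn : 0 ≤ F := ENNReal.toReal_nonneg
    have hF0 : 0 < F := by
      rcases hFnn.eq_or_lt with h0 | h0
      · exfalso
        rw [hGadef, ← h0] at Ha1
        simp only [Real.log_zero, abs_zero] at Ha1
        have hpos : (0:ℝ) < c / (2*C) * L1 := by positivity
        linarith
      · exact h0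
    have hGe : Real.exp 1 ≤ Ga := by
      have h1 : Real.log F ≤ -Real.exp 1 := by
        have := Real.log_le_log hF0 HFa
        rwa [Real.log_exp] at this
      have habs : Ga = -Real.log F := by
        rw [hGadef]
        exact abs_of_nonpos (by linarith [Real.exp_pos 1])
      rw [habs]
      linarith
    have hG0 : (0:ℝ) < Ga := lt_of_lt_of_le (Real.exp_pos 1) hGe
    have hlogG1 : (1:ℝ) ≤ Real.log Ga := (Real.le_log_iff_exp_le hG0).2 hGe
    have hlogGa : Real.log Ga ≤ Real.exp (L1 / 2) :=
      (Real.log_le_iff_le_exp (by linarith)).1 Ha2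
    have hGa : Ga ≤ Real.exp (Real.exp (L1 / 2)) :=
      (Real.log_le_iff_le_exp hG0).1 hlogGa
    -- ψ ≤ l εa + Ga
    have hψup : ψ ≤ l * εa + Ga := by
      rw [hψdef]
      exact loglemA hF0 hF1 (by simpa [neg_mul] using L_lower P hV hVpos hl0.le εa)
    -- l * εa = (2C)^θ * A
    have hlεaA : l * εa = (2*C) ^ θ * A := by
      have e2 : εa = (2*C) ^ θ * L1 ^ (-θ) := by
        rw [hεadef, hxadef, mul_comm (2*C) L1⁻¹]
        rw [Real.mul_rpow (by positivity) (by positivity),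
          Real.inv_rpow hL10.le, ← Real.rpow_neg hL10.le]
        ring
      rw [e2, hAdef]; ring
    -- G εa ≤ A
    have hGA : Ga ≤ A := by
      refine hGa.trans ?_
      have h1 : Real.exp (Real.exp (L1 / 2)) * L1 ^ θ ≤ Real.exp (Real.exp L1) := hmid
      rw [hexpexpL1] at h1
      rw [hAeq, le_div_iff₀ hL1θpos]
      exact h1
    rw [hlεaA] at hψup
    linarith



/-- Tauberian equivalence: for a positive random variable `V` and `θ > 0`,
`-log E[e^(-λV)] ≍ λ (log log λ)^(-θ)` as `λ → ∞` if and only if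
`log log|log P(V ≤ ε)| ≍ ε^(-1/θ)` as `ε → 0⁺`. -/
theorem stmt14 (Ω : Type) [MeasurableSpace Ω] (P : Measure Ω) [IsProbabilityMeasure P]
    (V : Ω → ℝ) (hV : Measurable V) (hVpos : ∀ ω, 0 < V ω)
    (θ : ℝ) (hθ : 0 < θ) :
    (∃ c C : ℝ, 0 < c ∧ c ≤ C ∧
      ∀ᶠ l in atTop,
        c * (l * Real.log (Real.log l) ^ (-θ)) ≤
          -Real.log (∫ ω, Real.exp (-(l * V ω)) ∂P) ∧
        -Real.log (∫ ω, Real.exp (-(l * V ω)) ∂P) ≤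
          C * (l * Real.log (Real.log l) ^ (-θ))) ↔
    (∃ c C : ℝ, 0 < c ∧ c ≤ C ∧
      ∀ᶠ ε in nhdsWithin (0 : ℝ) (Set.Ioi 0),
        c * ε ^ (-1 / θ) ≤
          Real.log (Real.log |Real.log ((P {ω | V ω ≤ ε}).toReal)|) ∧
        Real.log (Real.log |Real.log ((P {ω | V ω ≤ ε}).toReal)|) ≤
          C * ε ^ (-1 / θ)) := by
  constructor
  · rintro ⟨c, C, hc, hcC, h⟩
    exact dirA P hV hVpos hθ hc hcC h
  · rintro ⟨c, C, hc, hcC, h⟩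
    exact dirB P hV hVpos hθ hc hcC h
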